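/- Let E be a real inner product space, X ⊆ E a convex set of diameter at most D, f : E → ℝ a function that is μ-strongly convex on X and G-Lipschitz on X, and let S_1 ⊇ S_2 ⊇ ⋯ ⊇ S_T be nested nonempty subsets of X such that f attains its minimum over S_t at a point x_t^⋆ ∈ S_t for each t. If each S_t is convex, then ∑_{t=1}^{T−1} ‖x_{t+1}^⋆ − x_t^⋆‖ ≤ √(2·G·D·T/μ). Consequently the movement cost of the greedy algorithm is at most √(2GDT/μ) + D = O(√T). -/

import Mathlib

/-- O(√T) upper bound on the movement cost of the greedy algorithm when `f` is
`μ`-strongly convex and `G`-Lipschitz on a convex set `X` of diameter at most `D`: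
the total movement between successive constrained minimizers `x_t^⋆` over nested
convex sets `S t ⊆ X` is at most `√(2GDT/μ)`, and consequently the greedy movement
cost (starting from any `x₀ ∈ X`) is at most `√(2GDT/μ) + D`. -/
theorem greedy_movement_upper_bound_strongly_convex
    {E : Type*} [NormedAddCommGroup E] [InnerProductSpace ℝ E]
    (X : Set E) (hX : Convex ℝ X)
    (μ G D : ℝ) (hμ : 0 < μ) (hG : 0 < G) (hD : 0 < D)
    (hdiam : ∀ x ∈ X, ∀ y ∈ X, ‖x - y‖ ≤ D)
    (f : E → ℝ)
    (hsc : ∀ x ∈ X, ∀ y ∈ X, ∀ l : ℝ, 0 ≤ l → l ≤ 1 →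
      f (l • x + (1 - l) • y) ≤
        l * f x + (1 - l) * f y - l * (1 - l) * (μ / 2) * ‖x - y‖ ^ 2)
    (hlip : ∀ x ∈ X, ∀ y ∈ X, |f x - f y| ≤ G * ‖x - y‖)
    (T : ℕ) (hT : 1 ≤ T)
    (S : ℕ → Set E)
    (hSsub : ∀ t ∈ Finset.Icc 1 T, S t ⊆ X)
    (hSconv : ∀ t ∈ Finset.Icc 1 T, Convex ℝ (S t))
    (hnest : ∀ t, 1 ≤ t → t < T → S (t + 1) ⊆ S t)
    (xs : ℕ → E)
    (hmin : ∀ t ∈ Finset.Icc 1 T, xs t ∈ S t ∧ ∀ y ∈ S t, f (xs t) ≤ f y) :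
    (∑ t ∈ Finset.Icc 1 (T - 1), ‖xs (t + 1) - xs t‖ ≤
      Real.sqrt (2 * G * D * T / μ)) ∧
    (∀ x₀ ∈ X, ‖xs 1 - x₀‖ + ∑ t ∈ Finset.Icc 1 (T - 1), ‖xs (t + 1) - xs t‖ ≤
      Real.sqrt (2 * G * D * T / μ) + D) := by
  -- per-step key bound
  have key : ∀ t ∈ Finset.Icc 1 (T - 1),
      (μ / 2) * ‖xs (t + 1) - xs t‖ ^ 2 ≤ f (xs (t + 1)) - f (xs t) := by
    intro t ht
    rw [Finset.mem_Icc] at ht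
    obtain ⟨ht1, ht2⟩ := ht
    have htT : t < T := by omega
    have htIcc : t ∈ Finset.Icc 1 T := Finset.mem_Icc.2 ⟨ht1, by omega⟩
    have ht1Icc : t + 1 ∈ Finset.Icc 1 T := Finset.mem_Icc.2 ⟨by omega, by omega⟩
    have hxSt : xs t ∈ S t := (hmin t htIcc).1
    have hySt : xs (t + 1) ∈ S t := hnest t ht1 htT ((hmin (t + 1) ht1Icc).1)
    have hxX : xs t ∈ X := hSsub t htIcc hxSt
    have hyX : xs (t + 1) ∈ X := hSsub t htIcc hySt
    set a := (μ / 2) * ‖xs (t + 1) - xs t‖ ^ 2 with ha_def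
    set b := f (xs (t + 1)) - f (xs t) with hb_def
    have ha : 0 ≤ a := by positivity
    have hb : 0 ≤ b := sub_nonneg.2 ((hmin t htIcc).2 _ hySt)
    have hl : ∀ l : ℝ, 0 < l → l ≤ 1 → (1 - l) * a ≤ b := by
      intro l hl0 hl1
      have hz := hsc (xs (t + 1)) hyX (xs t) hxX l (le_of_lt hl0) hl1
      have hzmem : l • xs (t + 1) + (1 - l) • xs t ∈ S t :=
        (hSconv t htIcc) hySt hxSt (le_of_lt hl0) (by linarith) (by ring)
      have hmin' := (hmin t htIcc).2 _ hzmem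
      have h3 : l * ((1 - l) * a) ≤ l * b := by
        simp only [ha_def, hb_def]
        nlinarith [hz, hmin']
      exact le_of_mul_le_mul_left h3 hl0
    by_contra hcon
    push_neg at hcon
    have ha0 : 0 < a := lt_of_le_of_lt hb hcon
    have hlam0 : 0 < (a - b) / (2 * a) := by
      apply div_pos (by linarith) (by linarith)
    have hlam1 : (a - b) / (2 * a) ≤ 1 := by
      rw [div_le_one (by linarith)]; linarith
    have := hl _ hlam0 hlam1
    have heq : (1 - (a - b) / (2 * a)) * a = (a + b) / 2 := by
      field_simp; ring
    rw [heq] at this; linarith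
  -- telescoping sum bound
  have hIcc : Finset.Icc 1 (T - 1) = Finset.Ico 1 T := by
    ext x; simp only [Finset.mem_Icc, Finset.mem_Ico]; omega
  have htel : ∑ t ∈ Finset.Icc 1 (T - 1), (f (xs (t + 1)) - f (xs t))
      = f (xs T) - f (xs 1) := by
    rw [hIcc, Finset.sum_Ico_eq_sum_range]
    have := Finset.sum_range_sub (fun i => f (xs (1 + i))) (T - 1)
    calc ∑ i ∈ Finset.range (T - 1), (f (xs (1 + i + 1)) - f (xs (1 + i)))
        = ∑ i ∈ Finset.range (T - 1), (f (xs (1 + (i + 1))) - f (xs (1 + i))) := by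
          apply Finset.sum_congr rfl; intro i _; ring_nf
      _ = f (xs (1 + (T - 1))) - f (xs (1 + 0)) := this
      _ = f (xs T) - f (xs 1) := by
          have h1 : 1 + (T - 1) = T := by omega
          rw [h1]
  have hTIcc : T ∈ Finset.Icc 1 T := Finset.mem_Icc.2 ⟨hT, le_refl T⟩
  have h1Icc : (1 : ℕ) ∈ Finset.Icc 1 T := Finset.mem_Icc.2 ⟨le_refl 1, hT⟩
  have hxT : xs T ∈ X := hSsub T hTIcc (hmin T hTIcc).1
  have hx1 : xs 1 ∈ X := hSsub 1 h1Icc (hmin 1 h1Icc).1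
  have hGD : f (xs T) - f (xs 1) ≤ G * D := by
    calc f (xs T) - f (xs 1) ≤ |f (xs T) - f (xs 1)| := le_abs_self _
      _ ≤ G * ‖xs T - xs 1‖ := hlip _ hxT _ hx1
      _ ≤ G * D := by
          exact mul_le_mul_of_nonneg_left (hdiam _ hxT _ hx1) (le_of_lt hG)
  have hsumsq : ∑ t ∈ Finset.Icc 1 (T - 1), ‖xs (t + 1) - xs t‖ ^ 2 ≤ 2 * G * D / μ := by
    have h1 : (μ / 2) * ∑ t ∈ Finset.Icc 1 (T - 1), ‖xs (t + 1) - xs t‖ ^ 2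
        ≤ G * D := by
      rw [Finset.mul_sum]
      calc ∑ t ∈ Finset.Icc 1 (T - 1), (μ / 2) * ‖xs (t + 1) - xs t‖ ^ 2
          ≤ ∑ t ∈ Finset.Icc 1 (T - 1), (f (xs (t + 1)) - f (xs t)) :=
            Finset.sum_le_sum key
        _ = f (xs T) - f (xs 1) := htel
        _ ≤ G * D := hGD
    rw [le_div_iff₀ hμ]
    nlinarith
  -- Cauchy–Schwarz
  have hcard : (Finset.Icc 1 (T - 1)).card = T - 1 := by
    rw [Nat.card_Icc]; omega
  have hCS : (∑ t ∈ Finset.Icc 1 (T - 1), ‖xs (t + 1) - xs t‖) ^ 2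
      ≤ (T - 1 : ℕ) * ∑ t ∈ Finset.Icc 1 (T - 1), ‖xs (t + 1) - xs t‖ ^ 2 := by
    have := sq_sum_le_card_mul_sum_sq (s := Finset.Icc 1 (T - 1))
      (f := fun t => ‖xs (t + 1) - xs t‖)
    rwa [hcard] at this
  have hsum_nonneg : 0 ≤ ∑ t ∈ Finset.Icc 1 (T - 1), ‖xs (t + 1) - xs t‖ :=
    Finset.sum_nonneg fun _ _ => norm_nonneg _
  have hTcast : ((T - 1 : ℕ) : ℝ) ≤ (T : ℝ) := by
    exact_mod_cast Nat.cast_le.2 (Nat.sub_le T 1)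
  have hmain : ∑ t ∈ Finset.Icc 1 (T - 1), ‖xs (t + 1) - xs t‖
      ≤ Real.sqrt (2 * G * D * T / μ) := by
    rw [Real.le_sqrt hsum_nonneg (by positivity)]
    calc (∑ t ∈ Finset.Icc 1 (T - 1), ‖xs (t + 1) - xs t‖) ^ 2
        ≤ (T - 1 : ℕ) * ∑ t ∈ Finset.Icc 1 (T - 1), ‖xs (t + 1) - xs t‖ ^ 2 := hCS
      _ ≤ (T : ℝ) * (2 * G * D / μ) := by
          apply mul_le_mul hTcast hsumsq
            (Finset.sum_nonneg fun _ _ => by positivity) (by positivity)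
      _ = 2 * G * D * T / μ := by ring
  refine ⟨hmain, fun x₀ hx₀ => ?_⟩
  have : ‖xs 1 - x₀‖ ≤ D := hdiam _ hx1 _ hx₀
  linarith
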